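/- Hierarchical representation of the univariate skew-t distribution: if λ ∼ Gamma(ν/2, ν/2), u | λ ∼ N_+(0, λ^{-1}) (normal truncated to [0,∞)), and e | u, λ ∼ N(δu, λ^{-1}σ²), then the marginal density of e is ST(0, σ², δ, ν), i.e. 2 t(e; 0, σ²+δ², ν) T(ẽ; 0, 1, ν+1) with ẽ = (eδ/σ)√((ν+1)/(ν(σ²+δ²)+e²)). -/

import Mathlib

open MeasureTheory Real

/-- Normal density with mean `μ` and variance `v`. -/
noncomputable def normalPDF (μ v x : ℝ) : ℝ :=
  Real.exp (-(x - μ) ^ 2 / (2 * v)) / Real.sqrt (2 * Real.pi * v)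

/-- Gamma density with shape `α` and rate `β`. -/
noncomputable def gammaPDF (α β l : ℝ) : ℝ :=
  β ^ α * l ^ (α - 1) * Real.exp (-β * l) / Real.Gamma α

noncomputable def tPDF (μ s2 ν x : ℝ) : ℝ :=
  Real.Gamma ((ν + 1) / 2) / (Real.sqrt s2 * Real.sqrt (ν * Real.pi) * Real.Gamma (ν / 2)) *
    (1 + (x - μ) ^ 2 / (ν * s2)) ^ (-((ν + 1) / 2))

noncomputable def tCDF (ν x : ℝ) : ℝ := ∫ t in Set.Iic x, tPDF 0 1 ν t

noncomputable def stPDF (μ σ δ ν z : ℝ) : ℝ :=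
  2 * tPDF μ (σ ^ 2 + δ ^ 2) ν z *
    tCDF (ν + 1) ((z - μ) * δ / σ * Real.sqrt ((ν + 1) / (ν * (σ ^ 2 + δ ^ 2) + (z - μ) ^ 2)))

open Set

lemma my_integral_comp_mul_left_Iic (g : ℝ → ℝ) (a : ℝ) {b : ℝ} (hb : 0 < b) :
    (∫ x in Iic a, g (b * x)) = b⁻¹ • ∫ x in Iic (b * a), g x := by
  have : ∀ c : ℝ, MeasurableSet (Iic c) := fun c => measurableSet_Iic
  rw [← integral_indicator (this a), ← integral_indicator (this (b * a)),
    ← abs_of_pos (inv_pos.mpr hb), ← Measure.integral_comp_mul_left]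
  congr
  ext1 x
  rw [← Set.indicator_comp_right, preimage_const_mul_Iic₀ _ hb, mul_comm b a,
    mul_div_cancel_right₀ _ hb.ne']
  rfl

lemma my_integral_comp_add_right_Ici (f : ℝ → ℝ) (a d : ℝ) :
    (∫ x in Ici a, f (x + d)) = ∫ x in Ici (a + d), f x := by
  have A : MeasurableEmbedding fun x : ℝ => x + d :=
    (Homeomorph.addRight d).isClosedEmbedding.measurableEmbedding
  have h := MeasurableEmbedding.setIntegral_map (μ := volume) A f (Ici (a + d))
  rw [map_add_right_eq_self (volume : Measure ℝ) d] at h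
  have hpre : (fun x : ℝ => x + d) ⁻¹' Ici (a + d) = Ici a := by
    ext x; simp [Set.mem_preimage]
  rw [hpre] at h
  exact h.symm

lemma normalPDF_eq_std (m v u : ℝ) (hv : 0 < v) :
    normalPDF m v u = (Real.sqrt v)⁻¹ * normalPDF 0 1 ((Real.sqrt v)⁻¹ * (u - m)) := by
  have hsv : 0 < Real.sqrt v := Real.sqrt_pos.mpr hv
  unfold normalPDF
  rw [mul_one]
  have h1 : Real.sqrt (2 * Real.pi * v) = Real.sqrt (2 * Real.pi) * Real.sqrt v := by
    rw [Real.sqrt_mul (by positivity)]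
  have h2 : (-((Real.sqrt v)⁻¹ * (u - m) - 0) ^ 2 / 2) = -(u - m) ^ 2 / (2 * v) := by
    have hinv : ((Real.sqrt v)⁻¹)^2 = v⁻¹ := by
      rw [← Real.sqrt_inv, Real.sq_sqrt (by positivity)]
    rw [sub_zero, mul_pow, hinv]
    field_simp
  rw [h2, h1]
  field_simp

lemma halfGauss {m v : ℝ} (hv : 0 < v) :
    ∫ u in Ici (0:ℝ), normalPDF m v u
      = ∫ t in Iic (m / Real.sqrt v), normalPDF 0 1 t := by
  have hsv : 0 < Real.sqrt v := Real.sqrt_pos.mpr hv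
  have h1 : ∀ u : ℝ, normalPDF m v u
      = (fun x => (Real.sqrt v)⁻¹ * normalPDF 0 1 ((Real.sqrt v)⁻¹ * x)) (u + (-m)) := by
    intro u
    simpa [sub_eq_add_neg] using normalPDF_eq_std m v u hv
  calc ∫ u in Ici (0:ℝ), normalPDF m v u
      = ∫ u in Ici (0:ℝ),
          (fun x => (Real.sqrt v)⁻¹ * normalPDF 0 1 ((Real.sqrt v)⁻¹ * x)) (u + (-m)) := by
        exact setIntegral_congr_fun measurableSet_Ici (fun u _ => h1 u)
    _ = ∫ x in Ici (0 + -m), (Real.sqrt v)⁻¹ * normalPDF 0 1 ((Real.sqrt v)⁻¹ * x) :=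
        my_integral_comp_add_right_Ici (fun x => (Real.sqrt v)⁻¹ * normalPDF 0 1 ((Real.sqrt v)⁻¹ * x)) 0 (-m)
    _ = (Real.sqrt v)⁻¹ * ∫ x in Ici (-m), normalPDF 0 1 ((Real.sqrt v)⁻¹ * x) := by
        rw [zero_add, integral_const_mul]
    _ = (Real.sqrt v)⁻¹ * ∫ x in Ioi (-m), normalPDF 0 1 ((Real.sqrt v)⁻¹ * x) := by
        rw [integral_Ici_eq_integral_Ioi]
    _ = (Real.sqrt v)⁻¹ * (((Real.sqrt v)⁻¹)⁻¹ •
          ∫ x in Ioi ((Real.sqrt v)⁻¹ * (-m)), normalPDF 0 1 x) := by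
        rw [integral_comp_mul_left_Ioi (fun x => normalPDF 0 1 x) (-m) (inv_pos.mpr hsv)]
    _ = ∫ x in Ioi (-(m / Real.sqrt v)), normalPDF 0 1 x := by
        rw [smul_eq_mul, inv_inv, ← mul_assoc, inv_mul_cancel₀ hsv.ne', one_mul]
        congr 1
        field_simp
    _ = ∫ t in Iic (m / Real.sqrt v), normalPDF 0 1 t := by
        rw [← integral_comp_neg_Iic]
        refine setIntegral_congr_fun measurableSet_Iic (fun t _ => ?_)
        unfold normalPDF
        norm_num

lemma factor (σ δ e : ℝ) (hσ : 0 < σ) {l : ℝ} (hl : 0 < l) (u : ℝ) :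
    normalPDF (δ * u) (σ ^ 2 / l) e * (2 * normalPDF 0 l⁻¹ u)
      = 2 * normalPDF 0 ((σ ^ 2 + δ ^ 2) / l) e
          * normalPDF (δ * e / (σ ^ 2 + δ ^ 2)) (σ ^ 2 / (l * (σ ^ 2 + δ ^ 2))) u := by
  have hs2 : (0:ℝ) < σ ^ 2 + δ ^ 2 := by positivity
  unfold normalPDF
  have hXY : Real.sqrt (2 * Real.pi * (σ ^ 2 / l)) * Real.sqrt (2 * Real.pi * l⁻¹)
      = Real.sqrt (2 * Real.pi * ((σ ^ 2 + δ ^ 2) / l))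
        * Real.sqrt (2 * Real.pi * (σ ^ 2 / (l * (σ ^ 2 + δ ^ 2)))) := by
    rw [← Real.sqrt_mul (by positivity), ← Real.sqrt_mul (by positivity)]
    congr 1
    field_simp
  have hab : Real.exp (-(e - δ * u) ^ 2 / (2 * (σ ^ 2 / l)))
        * Real.exp (-(u - 0) ^ 2 / (2 * l⁻¹))
      = Real.exp (-(e - 0) ^ 2 / (2 * ((σ ^ 2 + δ ^ 2) / l)))
        * Real.exp (-(u - δ * e / (σ ^ 2 + δ ^ 2)) ^ 2
            / (2 * (σ ^ 2 / (l * (σ ^ 2 + δ ^ 2))))) := by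
    rw [← Real.exp_add, ← Real.exp_add]
    congr 1
    field_simp
    ring
  calc Real.exp (-(e - δ * u) ^ 2 / (2 * (σ ^ 2 / l))) / Real.sqrt (2 * Real.pi * (σ ^ 2 / l))
        * (2 * (Real.exp (-(u - 0) ^ 2 / (2 * l⁻¹)) / Real.sqrt (2 * Real.pi * l⁻¹)))
      = 2 * (Real.exp (-(e - δ * u) ^ 2 / (2 * (σ ^ 2 / l)))
          * Real.exp (-(u - 0) ^ 2 / (2 * l⁻¹)))
          / (Real.sqrt (2 * Real.pi * (σ ^ 2 / l)) * Real.sqrt (2 * Real.pi * l⁻¹)) := by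
        ring
    _ = 2 * (Real.exp (-(e - 0) ^ 2 / (2 * ((σ ^ 2 + δ ^ 2) / l)))
          * Real.exp (-(u - δ * e / (σ ^ 2 + δ ^ 2)) ^ 2
              / (2 * (σ ^ 2 / (l * (σ ^ 2 + δ ^ 2))))))
          / (Real.sqrt (2 * Real.pi * ((σ ^ 2 + δ ^ 2) / l))
            * Real.sqrt (2 * Real.pi * (σ ^ 2 / (l * (σ ^ 2 + δ ^ 2))))) := by
        rw [hab, hXY]
    _ = _ := by ring

lemma alg (G Γ' π' q a b c r p w W l abc : ℝ) (hq : q ≠ 0) (hΓ : Γ' ≠ 0) (hp : p ≠ 0)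
    (hr : r ≠ 0) (hll : r * r = l) (hpp : p * p = 2 * π') (hw : w * l = W)
    (habc : a * b * c = abc) :
    2 * (a / (p * q / r)) * (G * w * b / Γ') * (r * (c / p)) = G / (π' * q * Γ') * W * abc := by
  have hπ : π' ≠ 0 := by
    intro h
    apply hp
    have : p * p = 0 := by rw [hpp, h]; ring
    exact mul_self_eq_zero.mp this
  subst hll hw habc
  have hπ2 : π' = p * p / 2 := by linarith
  subst hπ2
  field_simp

lemma pointwise2 (σ δ ν e : ℝ) (hσ : 0 < σ) (hν : 0 < ν) {l : ℝ} (hl : 0 < l) (t : ℝ) :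
    2 * normalPDF 0 ((σ ^ 2 + δ ^ 2) / l) e * gammaPDF (ν / 2) (ν / 2) l
        * (Real.sqrt l * normalPDF 0 1 (Real.sqrt l * t))
      = (ν / 2) ^ (ν / 2) / (Real.pi * Real.sqrt (σ ^ 2 + δ ^ 2) * Real.Gamma (ν / 2))
          * l ^ (ν / 2)
          * Real.exp (-(l * ((ν + e ^ 2 / (σ ^ 2 + δ ^ 2) + t ^ 2) / 2))) := by
  have hs2 : (0:ℝ) < σ ^ 2 + δ ^ 2 := by positivity
  have hsl : 0 < Real.sqrt l := Real.sqrt_pos.mpr hl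
  have h2 : (Real.sqrt l * t - 0) ^ 2 = l * t ^ 2 := by
    rw [sub_zero, mul_pow, Real.sq_sqrt hl.le]
  have h1 : Real.sqrt (2 * Real.pi * ((σ ^ 2 + δ ^ 2) / l))
      = Real.sqrt (2 * Real.pi) * Real.sqrt (σ ^ 2 + δ ^ 2) / Real.sqrt l := by
    rw [show 2 * Real.pi * ((σ ^ 2 + δ ^ 2) / l) = 2 * Real.pi * (σ ^ 2 + δ ^ 2) / l by ring,
      Real.sqrt_div (by positivity), Real.sqrt_mul (by positivity)]
  have hpow : l ^ (ν / 2 - 1) * l = l ^ (ν / 2) := by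
    rw [Real.rpow_sub hl, Real.rpow_one, div_mul_cancel₀ _ hl.ne']
  have habc : Real.exp (-(e - 0) ^ 2 / (2 * ((σ ^ 2 + δ ^ 2) / l)))
        * Real.exp (-(ν / 2) * l) * Real.exp (-(l * t ^ 2) / 2)
      = Real.exp (-(l * ((ν + e ^ 2 / (σ ^ 2 + δ ^ 2) + t ^ 2) / 2))) := by
    rw [← Real.exp_add, ← Real.exp_add]
    congr 1
    field_simp
    ring
  unfold normalPDF gammaPDF
  rw [h2]
  simp only [mul_one]
  rw [h1]
  exact alg ((ν / 2) ^ (ν / 2)) (Real.Gamma (ν / 2)) Real.pi (Real.sqrt (σ ^ 2 + δ ^ 2))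
    (Real.exp (-(e - 0) ^ 2 / (2 * ((σ ^ 2 + δ ^ 2) / l)))) (Real.exp (-(ν / 2) * l))
    (Real.exp (-(l * t ^ 2) / 2)) (Real.sqrt l) (Real.sqrt (2 * Real.pi)) (l ^ (ν / 2 - 1))
    (l ^ (ν / 2)) l _
    (by positivity) (Real.Gamma_pos_of_pos (by positivity)).ne' (by positivity) hsl.ne'
    (Real.mul_self_sqrt hl.le) (Real.mul_self_sqrt (by positivity)) hpow habc

lemma gammaInt {α B : ℝ} (hα : 0 < α) (hB : 0 < B) :
    ∫ l in Ioi (0:ℝ), l ^ α * Real.exp (-(B * l)) = (1 / B) ^ (α + 1) * Real.Gamma (α + 1) := by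
  have h := Real.integral_rpow_mul_exp_neg_mul_Ioi (a := α + 1) (r := B) (by linarith) hB
  simpa [add_sub_cancel_right] using h

lemma intOn_rpow_exp {s b : ℝ} (hs : -1 < s) (hb : 0 < b) :
    IntegrableOn (fun x : ℝ => x ^ s * Real.exp (-(b * x))) (Ioi (0:ℝ)) := by
  have h := integrableOn_rpow_mul_exp_neg_mul_rpow hs (by norm_num : (0:ℝ) < 1) hb
  refine h.congr_fun (fun x hx => ?_) measurableSet_Ioi
  dsimp only
  rw [Real.rpow_one, neg_mul]

lemma intOn_Atsq {A q : ℝ} (hA : 0 < A) (hq : 1 ≤ q) :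
    Integrable (fun t : ℝ => (A + t ^ 2) ^ (-q)) := by
  have hq0 : 0 ≤ q := by linarith
  set m := min A 1 with hm
  have hm0 : 0 < m := lt_min hA one_pos
  have hcont : Continuous fun t : ℝ => (A + t ^ 2) ^ (-q) := by
    apply Continuous.rpow_const (by continuity)
    intro t; left; positivity
  have key : ∀ t : ℝ, (A + t ^ 2) ^ (-q) ≤ m ^ (-q) * (1 + t ^ 2)⁻¹ := by
    intro t
    have h1t : (0:ℝ) < 1 + t ^ 2 := by positivity
    have hAt : (0:ℝ) < A + t ^ 2 := by positivity
    have h1 : m * (1 + t ^ 2) ≤ A + t ^ 2 := by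
      have h2 : m ≤ A := min_le_left _ _
      have h3 : m ≤ 1 := min_le_right _ _
      nlinarith [sq_nonneg t]
    have h4 : (m * (1 + t ^ 2)) ^ q ≤ (A + t ^ 2) ^ q :=
      Real.rpow_le_rpow (by positivity) h1 hq0
    have h5 : m ^ q * (1 + t ^ 2) ≤ (m * (1 + t ^ 2)) ^ q := by
      rw [Real.mul_rpow hm0.le h1t.le]
      have : (1 + t ^ 2) ≤ (1 + t ^ 2) ^ q := by
        calc (1 + t ^ 2) = (1 + t ^ 2) ^ (1:ℝ) := (Real.rpow_one _).symm
        _ ≤ (1 + t ^ 2) ^ q := Real.rpow_le_rpow_of_exponent_le (by nlinarith [sq_nonneg t]) hq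
      exact mul_le_mul_of_nonneg_left this (Real.rpow_nonneg hm0.le q)
    have h6 : m ^ q * (1 + t ^ 2) ≤ (A + t ^ 2) ^ q := le_trans h5 h4
    rw [Real.rpow_neg hAt.le, Real.rpow_neg hm0.le]
    rw [← mul_inv]
    exact inv_anti₀ (by positivity) h6
  refine Integrable.mono (integrable_inv_one_add_sq.const_mul (m ^ (-q)))
    hcont.aestronglyMeasurable (ae_of_all _ fun t => ?_)
  have hAt : (0:ℝ) < A + t ^ 2 := by positivity
  have h1t : (0:ℝ) < 1 + t ^ 2 := by positivity
  rw [Real.norm_eq_abs, Real.norm_eq_abs, abs_of_nonneg (by positivity),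
    abs_of_nonneg (by positivity)]
  exact key t

lemma const_eq (ν : ℝ) (hν : 0 < ν) {s2 A E : ℝ} (hs2 : 0 < s2) (hA : 0 < A)
    (hAE : A = ν + E / s2) (hE : 0 ≤ E) :
    (ν / 2) ^ (ν / 2) / (Real.pi * Real.sqrt s2 * Real.Gamma (ν / 2))
        * Real.Gamma (ν / 2 + 1) * 2 ^ (ν / 2 + 1)
      = 2 * (Real.Gamma ((ν + 1) / 2) / (Real.sqrt s2 * Real.sqrt (ν * Real.pi)
            * Real.Gamma (ν / 2)) * (1 + E / (ν * s2)) ^ (-((ν + 1) / 2)))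
        * (Real.sqrt ((ν + 1) / A)
          * (Real.Gamma (ν / 2 + 1) / (Real.sqrt 1 * Real.sqrt ((ν + 1) * Real.pi)
              * Real.Gamma ((ν + 1) / 2)) * A ^ (ν / 2 + 1))) := by
  have hπ : (0:ℝ) < Real.pi := Real.pi_pos
  have hν1 : (0:ℝ) < ν + 1 := by linarith
  have h1 : 1 + E / (ν * s2) = A / ν := by
    rw [hAE]; field_simp
  rw [h1]
  -- decompose (A/ν)^(-((ν+1)/2))
  have r1 : (A / ν) ^ (-((ν + 1) / 2)) = ν ^ ((ν + 1) / 2) / A ^ ((ν + 1) / 2) := by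
    rw [Real.rpow_neg (by positivity), ← Real.inv_rpow (by positivity), inv_div,
      Real.div_rpow hν.le hA.le]
  rw [r1]
  -- ν^((ν+1)/2) = ν^(ν/2) * √ν
  have r2 : ν ^ ((ν + 1) / 2) = ν ^ (ν / 2) * Real.sqrt ν := by
    rw [show (ν + 1) / 2 = ν / 2 + 1 / 2 by ring, Real.rpow_add hν, Real.sqrt_eq_rpow]
  rw [r2]
  -- sqrt decompositions
  rw [Real.sqrt_mul hν.le, Real.sqrt_mul hν1.le, Real.sqrt_one,
    Real.sqrt_div hν1.le]
  -- A powers: A^(ν/2+1) = A^((ν+1)/2) * √A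
  have r3 : A ^ (ν / 2 + 1) = A ^ ((ν + 1) / 2) * Real.sqrt A := by
    rw [Real.sqrt_eq_rpow, ← Real.rpow_add hA]
    congr 1; ring
  rw [r3]
  -- (ν/2)^(ν/2) * 2^(ν/2+1) = 2 * ν^(ν/2)
  have r4 : (ν / 2) ^ (ν / 2) * 2 ^ (ν / 2 + 1) = 2 * ν ^ (ν / 2) := by
    rw [Real.rpow_add two_pos, Real.rpow_one, ← mul_assoc,
      ← Real.mul_rpow (by positivity) (by norm_num : (0:ℝ) ≤ 2),
      div_mul_cancel₀ _ (two_ne_zero)]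
    ring
  -- replace bare π on LHS by √π * √π
  have hππ : Real.pi = Real.sqrt Real.pi * Real.sqrt Real.pi :=
    (Real.mul_self_sqrt hπ.le).symm
  have hG1 : Real.Gamma ((ν + 1) / 2) ≠ 0 := (Real.Gamma_pos_of_pos (by positivity)).ne'
  have hG2 : Real.Gamma (ν / 2) ≠ 0 := (Real.Gamma_pos_of_pos (by positivity)).ne'
  have hsπ : Real.sqrt Real.pi ≠ 0 := by positivity
  have hss2 : Real.sqrt s2 ≠ 0 := by positivity
  have hsν : Real.sqrt ν ≠ 0 := by positivity
  have hsν1 : Real.sqrt (ν + 1) ≠ 0 := by positivity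
  have hsA : Real.sqrt A ≠ 0 := by positivity
  have hAp : A ^ ((ν + 1) / 2) ≠ 0 := by positivity
  calc (ν / 2) ^ (ν / 2) / (Real.pi * Real.sqrt s2 * Real.Gamma (ν / 2))
        * Real.Gamma (ν / 2 + 1) * 2 ^ (ν / 2 + 1)
      = ((ν / 2) ^ (ν / 2) * 2 ^ (ν / 2 + 1)) * Real.Gamma (ν / 2 + 1)
          / (Real.pi * Real.sqrt s2 * Real.Gamma (ν / 2)) := by ring
    _ = (2 * ν ^ (ν / 2)) * Real.Gamma (ν / 2 + 1)
          / ((Real.sqrt Real.pi * Real.sqrt Real.pi) * Real.sqrt s2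
            * Real.Gamma (ν / 2)) := by rw [r4, ← hππ]
    _ = _ := by
        field_simp

lemma rhs_form (σ δ ν e : ℝ) (hσ : 0 < σ) (hν : 0 < ν) :
    stPDF 0 σ δ ν e
      = 2 * tPDF 0 (σ ^ 2 + δ ^ 2) ν e *
          (Real.sqrt ((ν + 1) / (ν + e ^ 2 / (σ ^ 2 + δ ^ 2))) *
            (Real.Gamma (ν / 2 + 1) /
                (Real.sqrt 1 * Real.sqrt ((ν + 1) * Real.pi) * Real.Gamma ((ν + 1) / 2)) *
              (ν + e ^ 2 / (σ ^ 2 + δ ^ 2)) ^ (ν / 2 + 1))) *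
          ∫ t in Iic (δ * e / (σ * Real.sqrt (σ ^ 2 + δ ^ 2))),
            (ν + e ^ 2 / (σ ^ 2 + δ ^ 2) + t ^ 2) ^ (-(ν / 2 + 1)) := by
  have hs2 : (0:ℝ) < σ ^ 2 + δ ^ 2 := by positivity
  have hA : (0:ℝ) < ν + e ^ 2 / (σ ^ 2 + δ ^ 2) := by positivity
  have hν1 : (0:ℝ) < ν + 1 := by linarith
  set s2 := σ ^ 2 + δ ^ 2 with hs2def
  set A := ν + e ^ 2 / s2 with hAdef
  set κ := Real.sqrt ((ν + 1) / A) with hκdef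
  set c := δ * e / (σ * Real.sqrt s2) with hcdef
  have hκ : 0 < κ := Real.sqrt_pos.mpr (by positivity)
  unfold stPDF
  have harg : (e - 0) * δ / σ * Real.sqrt ((ν + 1) / (ν * s2 + (e - 0) ^ 2)) = κ * c := by
    rw [sub_zero]
    have hm : ν * s2 + e ^ 2 = s2 * A := by
      rw [hAdef]; field_simp
    rw [hm, show (ν + 1) / (s2 * A) = ((ν + 1) / A) / s2 by rw [div_div, mul_comm A s2],
      Real.sqrt_div (by positivity)]
    rw [hκdef, hcdef]
    field_simp
  rw [harg]
  unfold tCDF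
  rw [← hs2def]
  rw [show (∫ x in Iic (κ * c), tPDF 0 1 (ν + 1) x) = κ * ∫ t in Iic c, tPDF 0 1 (ν + 1) (κ * t) by
    rw [my_integral_comp_mul_left_Iic (tPDF 0 1 (ν + 1)) c hκ, smul_eq_mul, ← mul_assoc,
      mul_inv_cancel₀ hκ.ne', one_mul]]
  have hpt : ∀ t : ℝ, tPDF 0 1 (ν + 1) (κ * t)
      = (Real.Gamma (ν / 2 + 1) /
          (Real.sqrt 1 * Real.sqrt ((ν + 1) * Real.pi) * Real.Gamma ((ν + 1) / 2))
          * A ^ (ν / 2 + 1)) * (A + t ^ 2) ^ (-(ν / 2 + 1)) := by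
    intro t
    unfold tPDF
    rw [show (ν + 1 + 1) / 2 = ν / 2 + 1 by ring, sub_zero, mul_pow,
      Real.sq_sqrt (by positivity : (0:ℝ) ≤ (ν + 1) / A)]
    have h1 : 1 + (ν + 1) / A * t ^ 2 / ((ν + 1) * 1) = (A + t ^ 2) / A := by
      field_simp
    rw [h1, Real.div_rpow (by positivity) hA.le, Real.rpow_neg hA.le, div_inv_eq_mul]
    ring
  rw [setIntegral_congr_fun measurableSet_Iic (fun t _ => hpt t)]
  rw [integral_const_mul]
  field_simp

lemma lhs_inner (σ δ ν e : ℝ) (hσ : 0 < σ) (hν : 0 < ν) {l : ℝ} (hl : 0 < l) :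
    (∫ u in Ici (0:ℝ),
        normalPDF (δ * u) (σ ^ 2 / l) e * (2 * normalPDF 0 l⁻¹ u) * gammaPDF (ν / 2) (ν / 2) l)
      = ∫ t in Iic (δ * e / (σ * Real.sqrt (σ ^ 2 + δ ^ 2))),
          (ν / 2) ^ (ν / 2) / (Real.pi * Real.sqrt (σ ^ 2 + δ ^ 2) * Real.Gamma (ν / 2))
            * l ^ (ν / 2) * Real.exp (-(l * ((ν + e ^ 2 / (σ ^ 2 + δ ^ 2) + t ^ 2) / 2))) := by
  have hs2 : (0:ℝ) < σ ^ 2 + δ ^ 2 := by positivity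
  have hsl : 0 < Real.sqrt l := Real.sqrt_pos.mpr hl
  have hv : (0:ℝ) < σ ^ 2 / (l * (σ ^ 2 + δ ^ 2)) := by positivity
  have hss : Real.sqrt (σ ^ 2 + δ ^ 2) * Real.sqrt (σ ^ 2 + δ ^ 2) = σ ^ 2 + δ ^ 2 :=
    Real.mul_self_sqrt hs2.le
  have hsqv : Real.sqrt (σ ^ 2 / (l * (σ ^ 2 + δ ^ 2)))
      = σ / (Real.sqrt l * Real.sqrt (σ ^ 2 + δ ^ 2)) := by
    rw [show σ ^ 2 / (l * (σ ^ 2 + δ ^ 2))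
        = (σ / (Real.sqrt l * Real.sqrt (σ ^ 2 + δ ^ 2))) ^ 2 by
      rw [div_pow, mul_pow, Real.sq_sqrt hl.le, Real.sq_sqrt hs2.le]]
    exact Real.sqrt_sq (by positivity)
  have harg : δ * e / (σ ^ 2 + δ ^ 2) / Real.sqrt (σ ^ 2 / (l * (σ ^ 2 + δ ^ 2)))
      = Real.sqrt l * (δ * e / (σ * Real.sqrt (σ ^ 2 + δ ^ 2))) := by
    rw [hsqv]
    have hq := hss
    generalize hqd : Real.sqrt (σ ^ 2 + δ ^ 2) = q at hq ⊢
    have hq0 : q ≠ 0 := by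
      intro h; rw [h] at hq; simp at hq; nlinarith
    rw [← hq]
    field_simp
  calc (∫ u in Ici (0:ℝ),
        normalPDF (δ * u) (σ ^ 2 / l) e * (2 * normalPDF 0 l⁻¹ u) * gammaPDF (ν / 2) (ν / 2) l)
      = ∫ u in Ici (0:ℝ),
          (2 * normalPDF 0 ((σ ^ 2 + δ ^ 2) / l) e * gammaPDF (ν / 2) (ν / 2) l)
            * normalPDF (δ * e / (σ ^ 2 + δ ^ 2)) (σ ^ 2 / (l * (σ ^ 2 + δ ^ 2))) u := by
        refine setIntegral_congr_fun measurableSet_Ici (fun u _ => ?_)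
        rw [factor σ δ e hσ hl u]
        ring
    _ = (2 * normalPDF 0 ((σ ^ 2 + δ ^ 2) / l) e * gammaPDF (ν / 2) (ν / 2) l)
          * ∫ u in Ici (0:ℝ),
              normalPDF (δ * e / (σ ^ 2 + δ ^ 2)) (σ ^ 2 / (l * (σ ^ 2 + δ ^ 2))) u := by
        rw [integral_const_mul]
    _ = (2 * normalPDF 0 ((σ ^ 2 + δ ^ 2) / l) e * gammaPDF (ν / 2) (ν / 2) l)
          * ∫ t in Iic (Real.sqrt l * (δ * e / (σ * Real.sqrt (σ ^ 2 + δ ^ 2)))),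
              normalPDF 0 1 t := by
        rw [halfGauss hv, harg]
    _ = (2 * normalPDF 0 ((σ ^ 2 + δ ^ 2) / l) e * gammaPDF (ν / 2) (ν / 2) l)
          * (Real.sqrt l * ∫ t in Iic (δ * e / (σ * Real.sqrt (σ ^ 2 + δ ^ 2))),
              normalPDF 0 1 (Real.sqrt l * t)) := by
        rw [my_integral_comp_mul_left_Iic (normalPDF 0 1) _ hsl, smul_eq_mul,
          mul_inv_cancel_left₀ hsl.ne']
    _ = ∫ t in Iic (δ * e / (σ * Real.sqrt (σ ^ 2 + δ ^ 2))),
          2 * normalPDF 0 ((σ ^ 2 + δ ^ 2) / l) e * gammaPDF (ν / 2) (ν / 2) l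
            * (Real.sqrt l * normalPDF 0 1 (Real.sqrt l * t)) := by
        rw [← integral_const_mul, ← integral_const_mul]
    _ = _ := by
        refine setIntegral_congr_fun measurableSet_Iic (fun t _ => ?_)
        exact pointwise2 σ δ ν e hσ hν hl t

lemma swap_lemma (K0 A c ν : ℝ) (hK0 : 0 < K0) (hA : 0 < A) (hν : 0 < ν) :
    (∫ l in Ioi (0:ℝ), ∫ t in Iic c, K0 * l ^ (ν / 2) * Real.exp (-(l * ((A + t ^ 2) / 2))))
      = ∫ t in Iic c, ∫ l in Ioi (0:ℝ), K0 * l ^ (ν / 2) * Real.exp (-(l * ((A + t ^ 2) / 2))) := by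
  have hmeas : Measurable (Function.uncurry
      (fun l t : ℝ => K0 * l ^ (ν / 2) * Real.exp (-(l * ((A + t ^ 2) / 2))))) := by
    apply Measurable.mul
    · exact (measurable_const.mul ((measurable_fst (β := ℝ)).pow_const (ν / 2)))
    · exact ((measurable_fst.mul
        (((measurable_const.add ((measurable_snd (α := ℝ)).pow measurable_const)).div
          measurable_const))).neg).exp
  apply integral_integral_swap
  rw [integrable_prod_iff hmeas.aestronglyMeasurable]
  constructor
  · filter_upwards [ae_restrict_mem measurableSet_Ioi] with l hl
    have hl' : (0:ℝ) < l := hl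
    have hrepr : (fun t : ℝ => K0 * l ^ (ν / 2) * Real.exp (-(l * ((A + t ^ 2) / 2))))
        = fun t => (K0 * l ^ (ν / 2) * Real.exp (-(l * A / 2))) * Real.exp (-(l / 2) * t ^ 2) := by
      funext t
      rw [show -(l * ((A + t ^ 2) / 2)) = -(l * A / 2) + -(l / 2) * t ^ 2 by ring, Real.exp_add]
      ring
    simp only [Function.uncurry_apply_pair]
    rw [hrepr]
    exact ((integrable_exp_neg_mul_sq (half_pos hl')).const_mul _).restrict
  · have hgInt : IntegrableOn
        (fun l : ℝ => (K0 * Real.sqrt (2 * Real.pi))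
          * (l ^ (ν / 2 - 1 / 2) * Real.exp (-(A / 2 * l)))) (Ioi (0:ℝ)) :=
      (intOn_rpow_exp (by linarith : (-1:ℝ) < ν / 2 - 1 / 2) (by positivity)).const_mul _
    refine Integrable.mono hgInt (hmeas.aestronglyMeasurable.norm.integral_prod_right') ?_
    filter_upwards [ae_restrict_mem measurableSet_Ioi] with l hl
    have hl' : (0:ℝ) < l := hl
    have hFnn : ∀ t : ℝ, 0 ≤ K0 * l ^ (ν / 2) * Real.exp (-(l * ((A + t ^ 2) / 2))) := by
      intro t
      have : (0:ℝ) ≤ l ^ (ν / 2) := Real.rpow_nonneg hl'.le _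
      positivity
    have hrepr : (fun t : ℝ => K0 * l ^ (ν / 2) * Real.exp (-(l * ((A + t ^ 2) / 2))))
        = fun t => (K0 * l ^ (ν / 2) * Real.exp (-(l * A / 2))) * Real.exp (-(l / 2) * t ^ 2) := by
      funext t
      rw [show -(l * ((A + t ^ 2) / 2)) = -(l * A / 2) + -(l / 2) * t ^ 2 by ring, Real.exp_add]
      ring
    have hint : Integrable (fun t : ℝ =>
        (K0 * l ^ (ν / 2) * Real.exp (-(l * A / 2))) * Real.exp (-(l / 2) * t ^ 2)) :=
      (integrable_exp_neg_mul_sq (half_pos hl')).const_mul _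
    have hval : (∫ t in Iic c, ‖K0 * l ^ (ν / 2) * Real.exp (-(l * ((A + t ^ 2) / 2)))‖)
        = ∫ t in Iic c, K0 * l ^ (ν / 2) * Real.exp (-(l * ((A + t ^ 2) / 2))) := by
      refine setIntegral_congr_fun measurableSet_Iic (fun t _ => ?_)
      rw [Real.norm_eq_abs, abs_of_nonneg (hFnn t)]
    have hb1 : (∫ t in Iic c, K0 * l ^ (ν / 2) * Real.exp (-(l * ((A + t ^ 2) / 2))))
        ≤ (K0 * l ^ (ν / 2) * Real.exp (-(l * A / 2))) * Real.sqrt (Real.pi / (l / 2)) := by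
      calc (∫ t in Iic c, K0 * l ^ (ν / 2) * Real.exp (-(l * ((A + t ^ 2) / 2))))
          = ∫ t in Iic c,
              (K0 * l ^ (ν / 2) * Real.exp (-(l * A / 2))) * Real.exp (-(l / 2) * t ^ 2) := by
            rw [show (fun t : ℝ => K0 * l ^ (ν / 2) * Real.exp (-(l * ((A + t ^ 2) / 2))))
              = fun t => (K0 * l ^ (ν / 2) * Real.exp (-(l * A / 2)))
                  * Real.exp (-(l / 2) * t ^ 2) from hrepr]
        _ ≤ ∫ t : ℝ, (K0 * l ^ (ν / 2) * Real.exp (-(l * A / 2)))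
              * Real.exp (-(l / 2) * t ^ 2) := by
            refine setIntegral_le_integral hint (ae_of_all _ fun t => ?_)
            have hp : (0:ℝ) ≤ l ^ (ν / 2) := Real.rpow_nonneg hl'.le _
            positivity
        _ = (K0 * l ^ (ν / 2) * Real.exp (-(l * A / 2))) * Real.sqrt (Real.pi / (l / 2)) := by
            rw [integral_const_mul, integral_gaussian]
    have hgeq : (K0 * l ^ (ν / 2) * Real.exp (-(l * A / 2))) * Real.sqrt (Real.pi / (l / 2))
        = (K0 * Real.sqrt (2 * Real.pi)) * (l ^ (ν / 2 - 1 / 2) * Real.exp (-(A / 2 * l))) := by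
      have h1 : Real.sqrt (Real.pi / (l / 2)) = Real.sqrt (2 * Real.pi) / Real.sqrt l := by
        rw [show Real.pi / (l / 2) = 2 * Real.pi / l by field_simp,
          Real.sqrt_div (by positivity)]
      have h2 : l ^ (ν / 2) / Real.sqrt l = l ^ (ν / 2 - 1 / 2) := by
        rw [Real.sqrt_eq_rpow, ← Real.rpow_sub hl']
      rw [h1, show -(l * A / 2) = -(A / 2 * l) by ring, ← h2]
      have hsl : Real.sqrt l ≠ 0 := (Real.sqrt_pos.mpr hl').ne'
      field_simp
    have hgnn : 0 ≤ (K0 * Real.sqrt (2 * Real.pi))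
        * (l ^ (ν / 2 - 1 / 2) * Real.exp (-(A / 2 * l))) := by
      have : (0:ℝ) ≤ l ^ (ν / 2 - 1 / 2) := Real.rpow_nonneg hl'.le _
      positivity
    rw [Real.norm_eq_abs (r := (K0 * Real.sqrt (2 * Real.pi))
        * (l ^ (ν / 2 - 1 / 2) * Real.exp (-(A / 2 * l)))), abs_of_nonneg hgnn]
    calc ‖∫ t in Iic c, ‖K0 * l ^ (ν / 2) * Real.exp (-(l * ((A + t ^ 2) / 2)))‖‖
        = ∫ t in Iic c, K0 * l ^ (ν / 2) * Real.exp (-(l * ((A + t ^ 2) / 2))) := by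
          rw [hval, Real.norm_eq_abs]
          refine abs_of_nonneg (setIntegral_nonneg measurableSet_Iic fun t _ => hFnn t)
      _ ≤ (K0 * l ^ (ν / 2) * Real.exp (-(l * A / 2))) * Real.sqrt (Real.pi / (l / 2)) := hb1
      _ = _ := hgeq

lemma inner_gamma (K0 A ν : ℝ) (hν : 0 < ν) (hA : 0 < A) (t : ℝ) :
    (∫ l in Ioi (0:ℝ), K0 * l ^ (ν / 2) * Real.exp (-(l * ((A + t ^ 2) / 2))))
      = (K0 * Real.Gamma (ν / 2 + 1) * 2 ^ (ν / 2 + 1)) * (A + t ^ 2) ^ (-(ν / 2 + 1)) := by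
  have hX : (0:ℝ) < A + t ^ 2 := by positivity
  have hB : (0:ℝ) < (A + t ^ 2) / 2 := by positivity
  calc (∫ l in Ioi (0:ℝ), K0 * l ^ (ν / 2) * Real.exp (-(l * ((A + t ^ 2) / 2))))
      = ∫ l in Ioi (0:ℝ), K0 * (l ^ (ν / 2) * Real.exp (-((A + t ^ 2) / 2 * l))) := by
        refine setIntegral_congr_fun measurableSet_Ioi (fun l _ => ?_)
        rw [show -(l * ((A + t ^ 2) / 2)) = -((A + t ^ 2) / 2 * l) by ring]
        ring
    _ = K0 * ((1 / ((A + t ^ 2) / 2)) ^ (ν / 2 + 1) * Real.Gamma (ν / 2 + 1)) := by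
        rw [integral_const_mul, gammaInt (half_pos hν) hB]
    _ = _ := by
        have h : (1 / ((A + t ^ 2) / 2)) ^ (ν / 2 + 1)
            = 2 ^ (ν / 2 + 1) * (A + t ^ 2) ^ (-(ν / 2 + 1)) := by
          rw [one_div_div, Real.div_rpow (by norm_num) hX.le, Real.rpow_neg hX.le,
            div_eq_mul_inv]
        rw [h]
        ring


/-- hierarchical representation of the univariate skew t-distribution:
marginalizing `λ ∼ Gamma(ν/2, ν/2)`, `u | λ ∼ N₊(0, λ⁻¹)` and `e | u, λ ∼ N(δu, λ⁻¹σ²)`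
yields the skew t density `ST(0, σ², δ, ν)`. -/
theorem stmt_12 (σ δ ν : ℝ) (hσ : 0 < σ) (hν : 0 < ν) :
    ∀ e : ℝ,
      (∫ l in Set.Ioi (0 : ℝ), ∫ u in Set.Ici (0 : ℝ),
        normalPDF (δ * u) (σ ^ 2 / l) e * (2 * normalPDF 0 l⁻¹ u) * gammaPDF (ν / 2) (ν / 2) l)
      = stPDF 0 σ δ ν e := by
  intro e
  have hs2 : (0:ℝ) < σ ^ 2 + δ ^ 2 := by positivity
  have hA : (0:ℝ) < ν + e ^ 2 / (σ ^ 2 + δ ^ 2) := by positivity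
  have hG2 : 0 < Real.Gamma (ν / 2) := Real.Gamma_pos_of_pos (half_pos hν)
  have hK0 : 0 < (ν / 2) ^ (ν / 2)
      / (Real.pi * Real.sqrt (σ ^ 2 + δ ^ 2) * Real.Gamma (ν / 2)) := by positivity
  calc (∫ l in Set.Ioi (0 : ℝ), ∫ u in Set.Ici (0 : ℝ),
        normalPDF (δ * u) (σ ^ 2 / l) e * (2 * normalPDF 0 l⁻¹ u) * gammaPDF (ν / 2) (ν / 2) l)
      = ∫ l in Ioi (0:ℝ), ∫ t in Iic (δ * e / (σ * Real.sqrt (σ ^ 2 + δ ^ 2))),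
          (ν / 2) ^ (ν / 2) / (Real.pi * Real.sqrt (σ ^ 2 + δ ^ 2) * Real.Gamma (ν / 2))
            * l ^ (ν / 2)
            * Real.exp (-(l * ((ν + e ^ 2 / (σ ^ 2 + δ ^ 2) + t ^ 2) / 2))) := by
        exact setIntegral_congr_fun measurableSet_Ioi
          (fun l hl => lhs_inner σ δ ν e hσ hν hl)
    _ = ∫ t in Iic (δ * e / (σ * Real.sqrt (σ ^ 2 + δ ^ 2))), ∫ l in Ioi (0:ℝ),
          (ν / 2) ^ (ν / 2) / (Real.pi * Real.sqrt (σ ^ 2 + δ ^ 2) * Real.Gamma (ν / 2))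
            * l ^ (ν / 2)
            * Real.exp (-(l * ((ν + e ^ 2 / (σ ^ 2 + δ ^ 2) + t ^ 2) / 2))) := by
        exact swap_lemma _ _ _ ν hK0 hA hν
    _ = ∫ t in Iic (δ * e / (σ * Real.sqrt (σ ^ 2 + δ ^ 2))),
          ((ν / 2) ^ (ν / 2) / (Real.pi * Real.sqrt (σ ^ 2 + δ ^ 2) * Real.Gamma (ν / 2))
              * Real.Gamma (ν / 2 + 1) * 2 ^ (ν / 2 + 1))
            * (ν + e ^ 2 / (σ ^ 2 + δ ^ 2) + t ^ 2) ^ (-(ν / 2 + 1)) := by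
        exact setIntegral_congr_fun measurableSet_Iic
          (fun t _ => inner_gamma _ _ ν hν hA t)
    _ = ((ν / 2) ^ (ν / 2) / (Real.pi * Real.sqrt (σ ^ 2 + δ ^ 2) * Real.Gamma (ν / 2))
            * Real.Gamma (ν / 2 + 1) * 2 ^ (ν / 2 + 1))
          * ∫ t in Iic (δ * e / (σ * Real.sqrt (σ ^ 2 + δ ^ 2))),
              (ν + e ^ 2 / (σ ^ 2 + δ ^ 2) + t ^ 2) ^ (-(ν / 2 + 1)) := by
        exact integral_const_mul _ _
    _ = stPDF 0 σ δ ν e := by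
        rw [rhs_form σ δ ν e hσ hν]
        have ht : tPDF 0 (σ ^ 2 + δ ^ 2) ν e
            = Real.Gamma ((ν + 1) / 2) / (Real.sqrt (σ ^ 2 + δ ^ 2)
                * Real.sqrt (ν * Real.pi) * Real.Gamma (ν / 2))
              * (1 + e ^ 2 / (ν * (σ ^ 2 + δ ^ 2))) ^ (-((ν + 1) / 2)) := by
          unfold tPDF
          rw [sub_zero]
        rw [ht]
        have hc := const_eq ν hν hs2 hA rfl (sq_nonneg e)
        rw [hc]
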